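/- Fix integers k ≥ 1, r ≥ 2, and integers 1 ≤ b_0 ≤ b_1 ≤ … ≤ b_{r−2} ≤ k. Then for all integers n, d ≥ 0: the number of sequences a ∈ 𝒞_{b_0,b_1,…,b_{r−2}} with ∑_i a_i = n and ∑_i i·a_i = d equals the number of sequences a ∈ 𝒞_{b_0−1,b_1,…,b_{r−2}} with ∑_i a_i = n and ∑_i i·a_i = d, plus the number of sequences a ∈ 𝒞_{b_1−b_0, b_2−b_0, …, b_{r−2}−b_0, k−b_0} with ∑_i a_i = n − b_0 and ∑_i i·a_i = d − n + b_0. -/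

import Mathlib

/-- Membership in the set `𝒞_{c_0,…,c_{r−2}}`: a finitely supported sequence
`a` with `a_i + ⋯ + a_{i+r−1} ≤ k` for all `i ≥ 0` and `a_0 + ⋯ + a_i ≤ c_i`
for `0 ≤ i ≤ r−2`. -/
def CCond (k r : ℕ) (c : Fin (r - 1) → ℕ) (a : ℕ →₀ ℕ) : Prop :=
  (∀ i : ℕ, ∑ j ∈ Finset.range r, a (i + j) ≤ k) ∧
    ∀ i : Fin (r - 1), ∑ j ∈ Finset.range ((i : ℕ) + 1), a j ≤ c i

namespace Stmt10Aux

/-- Prepend a value to a finitely supported sequence. -/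
noncomputable def consF (b0 : ℕ) (t : ℕ →₀ ℕ) : ℕ →₀ ℕ :=
  Finsupp.single 0 b0 + Finsupp.embDomain ⟨Nat.succ, Nat.succ_injective⟩ t

/-- Drop the first value of a finitely supported sequence. -/
noncomputable def tailF (a : ℕ →₀ ℕ) : ℕ →₀ ℕ :=
  Finsupp.comapDomain Nat.succ a (Nat.succ_injective.injOn)

@[simp] lemma tailF_apply (a : ℕ →₀ ℕ) (i : ℕ) : tailF a i = a (i + 1) := rfl

@[simp] lemma consF_zero (b0 : ℕ) (t : ℕ →₀ ℕ) : consF b0 t 0 = b0 := by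
  have h0 : (0 : ℕ) ∉ Set.range (⇑(⟨Nat.succ, Nat.succ_injective⟩ : ℕ ↪ ℕ)) := by
    rintro ⟨m, hm⟩; exact Nat.succ_ne_zero m hm
  rw [consF, Finsupp.add_apply, Finsupp.embDomain_notin_range _ _ _ h0,
    Finsupp.single_apply]
  simp

@[simp] lemma consF_succ (b0 : ℕ) (t : ℕ →₀ ℕ) (i : ℕ) : consF b0 t (i + 1) = t i := by
  have he := Finsupp.embDomain_apply_self (⟨Nat.succ, Nat.succ_injective⟩ : ℕ ↪ ℕ) t i
  simp only [Function.Embedding.coeFn_mk] at he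
  rw [consF, Finsupp.add_apply, show i + 1 = Nat.succ i from rfl, he,
    Finsupp.single_apply]
  simp

lemma tailF_consF (b0 : ℕ) (t : ℕ →₀ ℕ) : tailF (consF b0 t) = t := by
  ext i; simp

lemma consF_tailF (a : ℕ →₀ ℕ) : consF (a 0) (tailF a) = a := by
  ext i
  cases i with
  | zero => simp
  | succ m => simp

lemma sum_consF_count (b0 : ℕ) (t : ℕ →₀ ℕ) :
    (consF b0 t).sum (fun _ x => x) = b0 + t.sum (fun _ x => x) := by
  rw [consF, Finsupp.sum_add_index' (fun _ => rfl) (fun _ _ _ => rfl),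
    Finsupp.sum_single_index rfl, Finsupp.sum_embDomain]

lemma sum_consF_wt (b0 : ℕ) (t : ℕ →₀ ℕ) :
    (consF b0 t).sum (fun i x => i * x) =
      t.sum (fun i x => i * x) + t.sum (fun _ x => x) := by
  rw [consF, Finsupp.sum_add_index' (fun i => by simp) (fun i x y => by ring),
    Finsupp.sum_single_index (by simp), Finsupp.sum_embDomain]
  rw [Finsupp.sum, Finsupp.sum, Finsupp.sum, ← Finset.sum_add_distrib]
  simp only [Nat.zero_mul, zero_mul, zero_add]
  exact Finset.sum_congr rfl fun i _ => by simp [Nat.succ_mul]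

lemma sum_range_consF (b0 : ℕ) (t : ℕ →₀ ℕ) (m : ℕ) :
    ∑ j ∈ Finset.range (m + 1), consF b0 t j = b0 + ∑ j ∈ Finset.range m, t j := by
  rw [Finset.sum_range_succ']
  simp [add_comm]

lemma sum_range_consF_shift (b0 : ℕ) (t : ℕ →₀ ℕ) (i m : ℕ) :
    ∑ j ∈ Finset.range m, consF b0 t (i + 1 + j) = ∑ j ∈ Finset.range m, t (i + j) := by
  refine Finset.sum_congr rfl fun j _ => ?_
  have : i + 1 + j = (i + j) + 1 := by omega
  rw [this, consF_succ]

lemma apply_le_sum (a : ℕ →₀ ℕ) (f : ℕ → ℕ → ℕ) (hf : ∀ i, f i 0 = 0) (i : ℕ) :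
    f i (a i) ≤ a.sum f := by
  by_cases h : i ∈ a.support
  · exact Finset.single_le_sum (f := fun j => f j (a j)) (fun _ _ => Nat.zero_le _) h
  · rw [Finsupp.notMem_support_iff.mp h, hf]
    exact Nat.zero_le _

lemma finite_aux (N D : ℕ) (P : (ℕ →₀ ℕ) → Prop)
    (h : ∀ a, P a → a.sum (fun _ x => x) ≤ N ∧ a.sum (fun i x => i * x) ≤ D) :
    Finite {a : ℕ →₀ ℕ // P a} := by
  have key : ∀ a : ℕ →₀ ℕ, P a → ∀ i : ℕ, a i ≤ N ∧ (D < i → a i = 0) := by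
    intro a ha i
    obtain ⟨h1, h2⟩ := h a ha
    constructor
    · exact le_trans (apply_le_sum a (fun _ x => x) (fun _ => rfl) i) h1
    · intro hDi
      by_contra hne
      have h3 : i * a i ≤ D := le_trans (apply_le_sum a (fun i x => i * x) (fun _ => by simp) i) h2
      have : 1 ≤ a i := Nat.one_le_iff_ne_zero.mpr hne
      nlinarith
  refine Finite.of_injective
    (fun a : {a : ℕ →₀ ℕ // P a} => fun i : Fin (D + 1) =>
      (⟨a.1 i, Nat.lt_succ_of_le (key a.1 a.2 i).1⟩ : Fin (N + 1))) ?_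
  intro a a' hh
  ext i
  by_cases hi : i ≤ D
  · have := congrFun hh ⟨i, by omega⟩
    simpa [Fin.ext_iff] using this
  · rw [(key a.1 a.2 i).2 (by omega), (key a'.1 a'.2 i).2 (by omega)]

end Stmt10Aux

open Stmt10Aux

set_option maxHeartbeats 1000000 in
/-- the recursion
`χ^𝒞_{b_0,…,b_{r−2}} = χ^𝒞_{b_0−1,b_1,…,b_{r−2}} + z^{b_0} χ^𝒞_{b_1−b_0,…,b_{r−2}−b_0,k−b_0}(v,vz)`,
stated coefficientwise: the number of `a ∈ 𝒞_{b_0,…,b_{r−2}}` with `∑ a_i = n`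
and `∑ i·a_i = d` is the number of such `a ∈ 𝒞_{b_0−1,b_1,…,b_{r−2}}` plus the
number of `a ∈ 𝒞_{b_1−b_0,…,b_{r−2}−b_0,k−b_0}` with `∑ a_i = n − b_0` and
`∑ i·a_i = d − n + b_0` (the latter two equations written without natural
subtraction). -/
theorem stmt10 (k r : ℕ) (hk : 1 ≤ k) (hr : 2 ≤ r)
    (b : Fin (r - 1) → ℕ) (hb : Monotone b) (hbk : ∀ i, b i ≤ k)
    (hb0 : 1 ≤ b ⟨0, by omega⟩) (n d : ℕ) :
    Nat.card {a : ℕ →₀ ℕ // CCond k r b a ∧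
        a.sum (fun _ x => x) = n ∧ a.sum (fun i x => i * x) = d} =
      Nat.card {a : ℕ →₀ ℕ //
          CCond k r (Function.update b ⟨0, by omega⟩ (b ⟨0, by omega⟩ - 1)) a ∧
          a.sum (fun _ x => x) = n ∧ a.sum (fun i x => i * x) = d} +
      Nat.card {a : ℕ →₀ ℕ //
          CCond k r
            (fun i : Fin (r - 1) =>
              if h : (i : ℕ) + 1 < r - 1 then b ⟨(i : ℕ) + 1, h⟩ - b ⟨0, by omega⟩
              else k - b ⟨0, by omega⟩) a ∧
          a.sum (fun _ x => x) + b ⟨0, by omega⟩ = n ∧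
          a.sum (fun i x => i * x) + n = d + b ⟨0, by omega⟩} := by
  obtain ⟨s, rfl⟩ : ∃ s, r = s + 2 := ⟨r - 2, by omega⟩
  have h0lt : (0:ℕ) < s + 2 - 1 := by omega
  set b0 : ℕ := b ⟨0, h0lt⟩ with hb0def
  let P : (ℕ →₀ ℕ) → Prop := fun a => CCond k (s + 2) b a ∧
      a.sum (fun _ x => x) = n ∧ a.sum (fun i x => i * x) = d
  let Q : (ℕ →₀ ℕ) → Prop := fun a =>
      CCond k (s + 2) (Function.update b ⟨0, h0lt⟩ (b ⟨0, h0lt⟩ - 1)) a ∧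
      a.sum (fun _ x => x) = n ∧ a.sum (fun i x => i * x) = d
  let R : (ℕ →₀ ℕ) → Prop := fun a =>
      CCond k (s + 2)
        (fun i : Fin (s + 2 - 1) =>
          if h : (i : ℕ) + 1 < s + 2 - 1 then b ⟨(i : ℕ) + 1, h⟩ - b ⟨0, h0lt⟩
          else k - b ⟨0, h0lt⟩) a ∧
      a.sum (fun _ x => x) + b ⟨0, h0lt⟩ = n ∧
      a.sum (fun i x => i * x) + n = d + b ⟨0, h0lt⟩
  have hP : ∀ a, P a ↔ (CCond k (s + 2) b a ∧
      a.sum (fun _ x => x) = n ∧ a.sum (fun i x => i * x) = d) := fun _ => Iff.rfl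
  have hQ : ∀ a, Q a ↔ (CCond k (s + 2) (Function.update b ⟨0, h0lt⟩ (b ⟨0, h0lt⟩ - 1)) a ∧
      a.sum (fun _ x => x) = n ∧ a.sum (fun i x => i * x) = d) := fun _ => Iff.rfl
  have hR : ∀ a, R a ↔ (CCond k (s + 2)
        (fun i : Fin (s + 2 - 1) =>
          if h : (i : ℕ) + 1 < s + 2 - 1 then b ⟨(i : ℕ) + 1, h⟩ - b ⟨0, h0lt⟩
          else k - b ⟨0, h0lt⟩) a ∧
      a.sum (fun _ x => x) + b ⟨0, h0lt⟩ = n ∧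
      a.sum (fun i x => i * x) + n = d + b ⟨0, h0lt⟩) := fun _ => Iff.rfl
  show Nat.card {a : ℕ →₀ ℕ // P a} =
      Nat.card {a : ℕ →₀ ℕ // Q a} + Nat.card {a : ℕ →₀ ℕ // R a}
  -- any a satisfying P has a 0 ≤ b0
  have hP0 : ∀ a : ℕ →₀ ℕ, P a → a 0 ≤ b0 := by
    intro a ha
    have := ha.1.2 ⟨0, by omega⟩
    simpa [hb0def] using this
  -- finiteness
  haveI finP : Finite {a : ℕ →₀ ℕ // P a} :=
    finite_aux n d P (fun a ha => ⟨le_of_eq ha.2.1, le_of_eq ha.2.2⟩)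
  haveI finQ : Finite {a : ℕ →₀ ℕ // Q a} :=
    finite_aux n d Q (fun a ha => ⟨le_of_eq ha.2.1, le_of_eq ha.2.2⟩)
  haveI finR : Finite {a : ℕ →₀ ℕ // R a} :=
    finite_aux n (d + b0) R (fun a ha => ⟨by omega, by omega⟩)
  haveI finP1 : Finite {a : ℕ →₀ ℕ // P a ∧ a 0 < b0} :=
    finite_aux n d _ (fun a ha => ⟨le_of_eq ha.1.2.1, le_of_eq ha.1.2.2⟩)
  haveI finP2 : Finite {a : ℕ →₀ ℕ // P a ∧ a 0 = b0} :=
    finite_aux n d _ (fun a ha => ⟨le_of_eq ha.1.2.1, le_of_eq ha.1.2.2⟩)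
  -- split according to whether a 0 < b0 or a 0 = b0
  have split : Nat.card {a : ℕ →₀ ℕ // P a} =
      Nat.card {a : ℕ →₀ ℕ // P a ∧ a 0 < b0} +
      Nat.card {a : ℕ →₀ ℕ // P a ∧ a 0 = b0} := by
    rw [← Nat.card_sum]
    refine Nat.card_congr ?_
    refine ⟨fun x => if h : x.1 0 < b0 then Sum.inl ⟨x.1, x.2, h⟩
        else Sum.inr ⟨x.1, x.2, by have := hP0 x.1 x.2; omega⟩,
      Sum.elim (fun x => ⟨x.1, x.2.1⟩) (fun x => ⟨x.1, x.2.1⟩), ?_, ?_⟩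
    · intro x
      by_cases h : x.1 0 < b0 <;> simp [h]
    · rintro (⟨a, ha, h⟩ | ⟨a, ha, h⟩) <;> simp [h] <;> omega
  -- first part equals Q
  have eq1 : Nat.card {a : ℕ →₀ ℕ // P a ∧ a 0 < b0} = Nat.card {a : ℕ →₀ ℕ // Q a} := by
    refine Nat.card_congr (Equiv.subtypeEquivRight fun a => ?_)
    simp only [hP, hQ]
    unfold CCond
    constructor
    · rintro ⟨⟨⟨hw, hp⟩, hs⟩, hlt⟩
      refine ⟨⟨hw, fun i => ?_⟩, hs⟩
      by_cases hi : i = ⟨0, by omega⟩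
      · subst hi
        simp only [Function.update_self]
        have : ∑ j ∈ Finset.range (0 + 1), a j = a 0 := by simp
        rw [this]
        omega
      · rw [Function.update_of_ne hi]
        exact hp i
    · rintro ⟨⟨hw, hp⟩, hs⟩
      have h0 := hp ⟨0, by omega⟩
      simp only [Function.update_self] at h0
      have h0' : a 0 ≤ b0 - 1 := by simpa [hb0def] using h0
      refine ⟨⟨⟨hw, fun i => ?_⟩, hs⟩, by omega⟩
      by_cases hi : i = ⟨0, by omega⟩
      · subst hi
        have : ∑ j ∈ Finset.range (0 + 1), a j = a 0 := by simp
        simp only [this]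
        omega
      · have := hp i
        rwa [Function.update_of_ne hi] at this
  -- second part equals R, via consF/tailF
  have key : ∀ t : ℕ →₀ ℕ, P (consF b0 t) ↔ R t := by
    intro t
    simp only [hP, hR]
    unfold CCond
    constructor
    · rintro ⟨⟨hw, hp⟩, hs, hd⟩
      rw [sum_consF_count] at hs
      rw [sum_consF_wt] at hd
      refine ⟨⟨fun i => ?_, fun i => ?_⟩, by omega, by omega⟩
      · have h1 := hw (i + 1)
        rwa [sum_range_consF_shift] at h1
      · -- prefix conditions
        by_cases hi : (i : ℕ) + 1 < s + 2 - 1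
        · simp only [dif_pos hi]
          have h1 : ∑ j ∈ Finset.range ((i : ℕ) + 1 + 1), consF b0 t j ≤ b ⟨(i : ℕ) + 1, hi⟩ :=
            hp ⟨(i : ℕ) + 1, hi⟩
          rw [sum_range_consF] at h1
          omega
        · simp only [dif_neg hi]
          have hival : (i : ℕ) = s := by have := i.isLt; omega
          have h4 := hw 0
          simp only [zero_add] at h4
          rw [show s + 2 = s + 1 + 1 from rfl, sum_range_consF] at h4
          rw [hival]
          omega
    · rintro ⟨⟨hw, hp⟩, hs, hd⟩
      have hb0k : b0 ≤ k := hbk _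
      refine ⟨⟨fun i => ?_, fun i => ?_⟩, ?_, ?_⟩
      · cases i with
        | zero =>
          have h2 : ∑ l ∈ Finset.range (s + 1), t l ≤
              if h : s + 1 < s + 2 - 1 then b ⟨s + 1, h⟩ - b ⟨0, h0lt⟩
              else k - b ⟨0, h0lt⟩ := hp ⟨s, by omega⟩
          rw [dif_neg (by omega)] at h2
          show ∑ j ∈ Finset.range (s + 2), consF b0 t (0 + j) ≤ k
          simp only [zero_add]
          rw [show s + 2 = s + 1 + 1 from rfl, sum_range_consF]
          omega
        | succ m =>
          have h3 := hw m
          rw [sum_range_consF_shift]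
          exact h3
      · obtain ⟨iv, hiv⟩ := i
        cases iv with
        | zero =>
          show ∑ l ∈ Finset.range (0 + 1), consF b0 t l ≤ b ⟨0, hiv⟩
          rw [Finset.sum_range_one, consF_zero]
        | succ j =>
          have hj : j < s + 2 - 1 := by omega
          have h2 : ∑ l ∈ Finset.range (j + 1), t l ≤
              if h : j + 1 < s + 2 - 1 then b ⟨j + 1, h⟩ - b ⟨0, h0lt⟩
              else k - b ⟨0, h0lt⟩ := hp ⟨j, hj⟩
          rw [dif_pos (by omega : j + 1 < s + 2 - 1)] at h2
          have hmono : b0 ≤ b ⟨j + 1, by omega⟩ :=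
            hb (show (⟨0, h0lt⟩ : Fin (s + 2 - 1)) ≤ ⟨j + 1, by omega⟩ from by
              simp [Fin.mk_le_mk])
          show ∑ l ∈ Finset.range (j + 1 + 1), consF b0 t l ≤ b ⟨j + 1, hiv⟩
          rw [sum_range_consF]
          omega
      · rw [sum_consF_count]; omega
      · rw [sum_consF_wt]; omega
  have eq2 : Nat.card {a : ℕ →₀ ℕ // P a ∧ a 0 = b0} = Nat.card {a : ℕ →₀ ℕ // R a} := by
    refine Nat.card_congr ?_
    refine Equiv.trans (Equiv.mk
      (fun x => (⟨tailF x.1, by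
        have h := consF_tailF x.1
        rw [x.2.2] at h
        rw [h]; exact x.2.1⟩ : {t : ℕ →₀ ℕ // P (consF b0 t)}))
      (fun y => ⟨consF b0 y.1, (key y.1).mpr ((key y.1).mp y.2), consF_zero b0 y.1⟩)
      (fun x => Subtype.ext (by
        simp only
        have h := consF_tailF x.1
        rwa [x.2.2] at h))
      (fun y => Subtype.ext (tailF_consF b0 y.1)))
      (Equiv.subtypeEquivRight key)
  rw [split, eq1, eq2]
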